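/- arXiv:1102.1104 — 6 statements merged into one kernel-verified Lean document; each statement's English description precedes it below -/
import Mathlib

section
/- Fix N = 1 and α_Q, α_M, γ, λ_b, λ_s > 0. Then the system λ_b = (α_Q+α_M)x + γ min(x,y) and λ_s = (α_Q+α_M)y + γ min(x,y) has a unique solution (x, y) with x > 0 and y > 0. Moreover x > y if and only if λ_b > λ_s. -/
theorem stmt_4 (αQ αM γ lb ls : ℝ)
    (hαQ : 0 < αQ) (hαM : 0 < αM) (hγ : 0 < γ) (hlb : 0 < lb) (hls : 0 < ls) :
    (∃! p : ℝ × ℝ, 0 < p.1 ∧ 0 < p.2 ∧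
      lb = (αQ + αM) * p.1 + γ * min p.1 p.2 ∧
      ls = (αQ + αM) * p.2 + γ * min p.1 p.2) ∧
    (∀ x y : ℝ, 0 < x → 0 < y →
      lb = (αQ + αM) * x + γ * min x y →
      ls = (αQ + αM) * y + γ * min x y →
      (y < x ↔ ls < lb)) := by
  have hα : (0:ℝ) < αQ + αM := by linarith
  have hαγ : (0:ℝ) < αQ + αM + γ := by linarith
  constructor
  · rcases le_total lb ls with h | h
    · -- lb ≤ ls : x ≤ y, min = x
      refine ⟨(lb/(αQ+αM+γ), lb/(αQ+αM+γ) + (ls-lb)/(αQ+αM)), ⟨?_, ?_, ?_, ?_⟩, ?_⟩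
      · exact div_pos hlb hαγ
      · have h1 : 0 < lb/(αQ+αM+γ) := div_pos hlb hαγ
        have h2 : 0 ≤ (ls-lb)/(αQ+αM) := div_nonneg (by linarith) hα.le
        simpa using by linarith
      · have hm : min (lb/(αQ+αM+γ)) (lb/(αQ+αM+γ) + (ls-lb)/(αQ+αM))
            = lb/(αQ+αM+γ) := by
          apply min_eq_left
          have h2 : 0 ≤ (ls-lb)/(αQ+αM) := div_nonneg (by linarith) hα.le
          linarith
        simp only [hm]
        field_simp
      · have hm : min (lb/(αQ+αM+γ)) (lb/(αQ+αM+γ) + (ls-lb)/(αQ+αM))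
            = lb/(αQ+αM+γ) := by
          apply min_eq_left
          have h2 : 0 ≤ (ls-lb)/(αQ+αM) := div_nonneg (by linarith) hα.le
          linarith
        simp only [hm]
        field_simp
        ring
      · rintro ⟨x, y⟩ ⟨hx, hy, he1, he2⟩
        have hd : lb - ls = (αQ+αM) * (x - y) := by
          simp only at he1 he2; linarith
        have hxy : x ≤ y := by nlinarith
        have hm : min x y = x := min_eq_left hxy
        rw [hm] at he1 he2
        have hx' : x = lb/(αQ+αM+γ) := by
          field_simp; simp only at he1; linarith
        have hy' : y = lb/(αQ+αM+γ) + (ls-lb)/(αQ+αM) := by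
          rw [← hx']
          field_simp
          simp only at he1 he2
          nlinarith
        simp [Prod.ext_iff, hx', hy']
    · -- ls ≤ lb : y ≤ x, min = y
      refine ⟨(ls/(αQ+αM+γ) + (lb-ls)/(αQ+αM), ls/(αQ+αM+γ)), ⟨?_, ?_, ?_, ?_⟩, ?_⟩
      · have h1 : 0 < ls/(αQ+αM+γ) := div_pos hls hαγ
        have h2 : 0 ≤ (lb-ls)/(αQ+αM) := div_nonneg (by linarith) hα.le
        simpa using by linarith
      · exact div_pos hls hαγ
      · have hm : min (ls/(αQ+αM+γ) + (lb-ls)/(αQ+αM)) (ls/(αQ+αM+γ))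
            = ls/(αQ+αM+γ) := by
          apply min_eq_right
          have h2 : 0 ≤ (lb-ls)/(αQ+αM) := div_nonneg (by linarith) hα.le
          linarith
        simp only [hm]
        field_simp
        ring
      · have hm : min (ls/(αQ+αM+γ) + (lb-ls)/(αQ+αM)) (ls/(αQ+αM+γ))
            = ls/(αQ+αM+γ) := by
          apply min_eq_right
          have h2 : 0 ≤ (lb-ls)/(αQ+αM) := div_nonneg (by linarith) hα.le
          linarith
        simp only [hm]
        field_simp
      · rintro ⟨x, y⟩ ⟨hx, hy, he1, he2⟩
        have hd : lb - ls = (αQ+αM) * (x - y) := by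
          simp only at he1 he2; linarith
        have hxy : y ≤ x := by nlinarith
        have hm : min x y = y := min_eq_right hxy
        rw [hm] at he1 he2
        have hy' : y = ls/(αQ+αM+γ) := by
          field_simp; simp only at he2; linarith
        have hx' : x = ls/(αQ+αM+γ) + (lb-ls)/(αQ+αM) := by
          rw [← hy']
          field_simp
          simp only at he1 he2
          nlinarith
        simp [Prod.ext_iff, hx', hy']
  · intro x y hx hy he1 he2
    constructor
    · intro h; nlinarith
    · intro h; nlinarith
end

section
/- Let α_Q, α_M, γ, λ_b, λ_s > 0. Suppose (x, y) and (x', y') are two solutions in the positive orthant of the fixed-point system (6): λ_b = (α_Q+α_M)x_1 + γ min(x_1,y_1); α_M x_{i-1} = (α_Q+α_M)x_i + γ min(x_i,y_i) for 1 < i ≤ N; α_M y_{i+1} = (α_Q+α_M)y_i + γ min(x_i,y_i) for 1 ≤ i < N; λ_s = (α_Q+α_M)y_N + γ min(x_N,y_N). Then (x, y) = (x', y'). -/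
/-- Strict monotonicity of `t ↦ c*t + g*min t s` gives injectivity. -/
lemma min_aff_inj (c g a b s : ℝ) (hc : 0 < c) (hg : 0 ≤ g)
    (h : c * a + g * min a s = c * b + g * min b s) : a = b := by
  rcases lt_trichotomy a b with h1 | h1 | h1
  · have hm : min a s ≤ min b s := min_le_min h1.le le_rfl
    exfalso
    nlinarith [mul_pos hc (sub_pos.mpr h1), mul_nonneg hg (sub_nonneg.mpr hm)]
  · exact h1
  · have hm : min b s ≤ min a s := min_le_min h1.le le_rfl
    exfalso
    nlinarith [mul_pos hc (sub_pos.mpr h1), mul_nonneg hg (sub_nonneg.mpr hm)]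

/-- Main comparison lemma: if two solutions satisfy `x 1 ≤ x' 1`, `y' 1 < y 1`
and the balance relation at level 1, we get a contradiction at level `N`. -/
lemma lob_aux (N : ℕ) (hN : 1 ≤ N) (αQ αM γ ls : ℝ)
    (hαQ : 0 < αQ) (hαM : 0 < αM) (hγ : 0 < γ)
    (x y x' y' : ℕ → ℝ)
    (h2 : ∀ i, 2 ≤ i → i ≤ N →
      αM * x (i - 1) = (αQ + αM) * x i + γ * min (x i) (y i))
    (h3 : ∀ i, 1 ≤ i → i < N →
      αM * y (i + 1) = (αQ + αM) * y i + γ * min (x i) (y i))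
    (h4 : ls = (αQ + αM) * y N + γ * min (x N) (y N))
    (h2' : ∀ i, 2 ≤ i → i ≤ N →
      αM * x' (i - 1) = (αQ + αM) * x' i + γ * min (x' i) (y' i))
    (h3' : ∀ i, 1 ≤ i → i < N →
      αM * y' (i + 1) = (αQ + αM) * y' i + γ * min (x' i) (y' i))
    (h4' : ls = (αQ + αM) * y' N + γ * min (x' N) (y' N))
    (hu1 : 0 ≤ x' 1 - x 1) (hw1 : y' 1 - y 1 < 0)
    (hD1 : γ * (min (x' 1) (y' 1) - min (x 1) (y 1)) = -((αQ + αM) * (x' 1 - x 1))) :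
    False := by
  have key : ∀ i, 1 ≤ i → i ≤ N →
      0 ≤ x' i - x i ∧ y' i - y i < 0 ∧
      (αQ + αM) * (y' i - y i) + γ * (min (x' i) (y' i) - min (x i) (y i)) ≤
        -(αQ * ((x' i - x i) - (y' i - y i))) - αM * ((x' i - x i) - (y' 1 - y 1)) := by
    intro i hi
    induction i, hi using Nat.le_induction with
    | base => exact fun _ => ⟨hu1, hw1, by linarith⟩
    | succ i hi ih =>
      intro hiN
      have hiN' : i ≤ N := by omega
      have hiltN : i < N := by omega
      obtain ⟨hu, hw, hV⟩ := ih hiN'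
      have hSneg : (αQ + αM) * (y' i - y i) +
          γ * (min (x' i) (y' i) - min (x i) (y i)) < 0 := by
        nlinarith [mul_nonneg hαQ.le hu, mul_nonneg hαM.le hu,
          mul_pos hαQ (neg_pos.mpr hw), mul_pos hαM (neg_pos.mpr hw1)]
      have hy3 := h3 i (by omega) hiltN
      have hy3' := h3' i (by omega) hiltN
      have hstepy : αM * (y' (i + 1) - y (i + 1)) =
          (αQ + αM) * (y' i - y i) + γ * (min (x' i) (y' i) - min (x i) (y i)) := by
        linear_combination hy3' - hy3
      have hw2 : y' (i + 1) - y (i + 1) < 0 := by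
        by_contra hcon
        push_neg at hcon
        nlinarith [mul_nonneg hαM.le hcon]
      have hx2 := h2 (i + 1) (by omega) hiN
      have hx2' := h2' (i + 1) (by omega) hiN
      simp only [Nat.add_sub_cancel] at hx2 hx2'
      have hstepx : γ * (min (x' (i + 1)) (y' (i + 1)) - min (x (i + 1)) (y (i + 1))) =
          αM * (x' i - x i) - (αQ + αM) * (x' (i + 1) - x (i + 1)) := by
        linear_combination hx2 - hx2'
      have hu2 : 0 ≤ x' (i + 1) - x (i + 1) := by
        by_contra hcon
        push_neg at hcon
        have hxlt : x' (i + 1) < x (i + 1) := by linarith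
        have hmle : min (x' (i + 1)) (y' (i + 1)) ≤ min (x (i + 1)) (y (i + 1)) :=
          min_le_min hxlt.le (by linarith)
        have hpr1 : 0 < (αQ + αM) * -(x' (i + 1) - x (i + 1)) :=
          mul_pos (by linarith) (by linarith)
        have hpr2 : γ * (min (x' (i + 1)) (y' (i + 1)) - min (x (i + 1)) (y (i + 1))) ≤ 0 :=
          mul_nonpos_of_nonneg_of_nonpos hγ.le (sub_nonpos.mpr hmle)
        have hpr3 : 0 ≤ αM * (x' i - x i) := mul_nonneg hαM.le hu
        linarith [hstepx, hpr1, hpr2, hpr3]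
      refine ⟨hu2, hw2, ?_⟩
      have hpos : 0 ≤ αQ * ((x' i - x i) - (y' i - y i)) :=
        mul_nonneg hαQ.le (by linarith)
      linarith [hV, hstepy, hstepx, hpos]
  obtain ⟨hu, hw, hV⟩ := key N hN le_rfl
  have hSN : (αQ + αM) * (y' N - y N) +
      γ * (min (x' N) (y' N) - min (x N) (y N)) = 0 := by
    linear_combination h4 - h4'
  nlinarith [mul_nonneg hαQ.le hu, mul_nonneg hαM.le hu,
    mul_pos hαQ (neg_pos.mpr hw), mul_pos hαM (neg_pos.mpr hw1)]

theorem stmt_8 (N : ℕ) (hN : 1 ≤ N) (αQ αM γ lb ls : ℝ)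
    (hαQ : 0 < αQ) (hαM : 0 < αM) (hγ : 0 < γ) (hlb : 0 < lb) (hls : 0 < ls)
    (x y x' y' : ℕ → ℝ)
    (hx : ∀ i, 1 ≤ i → i ≤ N → 0 < x i) (hy : ∀ i, 1 ≤ i → i ≤ N → 0 < y i)
    (hx' : ∀ i, 1 ≤ i → i ≤ N → 0 < x' i) (hy' : ∀ i, 1 ≤ i → i ≤ N → 0 < y' i)
    (h1 : lb = (αQ + αM) * x 1 + γ * min (x 1) (y 1))
    (h2 : ∀ i, 2 ≤ i → i ≤ N →
      αM * x (i - 1) = (αQ + αM) * x i + γ * min (x i) (y i))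
    (h3 : ∀ i, 1 ≤ i → i < N →
      αM * y (i + 1) = (αQ + αM) * y i + γ * min (x i) (y i))
    (h4 : ls = (αQ + αM) * y N + γ * min (x N) (y N))
    (h1' : lb = (αQ + αM) * x' 1 + γ * min (x' 1) (y' 1))
    (h2' : ∀ i, 2 ≤ i → i ≤ N →
      αM * x' (i - 1) = (αQ + αM) * x' i + γ * min (x' i) (y' i))
    (h3' : ∀ i, 1 ≤ i → i < N →
      αM * y' (i + 1) = (αQ + αM) * y' i + γ * min (x' i) (y' i))
    (h4' : ls = (αQ + αM) * y' N + γ * min (x' N) (y' N)) :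
    ∀ i, 1 ≤ i → i ≤ N → x i = x' i ∧ y i = y' i := by
  have key1 : x 1 = x' 1 ∧ y 1 = y' 1 := by
    rcases lt_trichotomy (x 1) (x' 1) with hlt | heq | hgt
    · exfalso
      have hd : γ * (min (x' 1) (y' 1) - min (x 1) (y 1)) = -((αQ + αM) * (x' 1 - x 1)) := by
        linear_combination h1 - h1'
      have hmlt : min (x' 1) (y' 1) < min (x 1) (y 1) := by
        by_contra hcon
        push_neg at hcon
        nlinarith [mul_pos (add_pos hαQ hαM) (sub_pos.mpr hlt),
          mul_nonneg hγ.le (sub_nonneg.mpr hcon)]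
      have hy'1 : min (x' 1) (y' 1) = y' 1 := by
        rcases le_total (x' 1) (y' 1) with h | h
        · exfalso
          have h5 := min_eq_left h
          rw [h5] at hmlt
          linarith [min_le_left (x 1) (y 1)]
        · exact min_eq_right h
      have hw1 : y' 1 - y 1 < 0 := by
        rw [hy'1] at hmlt
        linarith [min_le_right (x 1) (y 1)]
      exact lob_aux N hN αQ αM γ ls hαQ hαM hγ x y x' y' h2 h3 h4 h2' h3' h4'
        (by linarith) hw1 hd
    · -- x 1 = x' 1
      have hd : γ * (min (x' 1) (y' 1) - min (x 1) (y 1)) = -((αQ + αM) * (x' 1 - x 1)) := by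
        linear_combination h1 - h1'
      have h0 : γ * (min (x' 1) (y' 1) - min (x 1) (y 1)) = 0 := by
        have h' : x' 1 - x 1 = 0 := by rw [heq]; ring
        linear_combination hd - (αQ + αM) * h'
      have hmeq : min (x 1) (y 1) = min (x' 1) (y' 1) := by
        have := (mul_eq_zero.mp h0).resolve_left hγ.ne'
        linarith [this]
      rcases lt_trichotomy (y 1) (y' 1) with hy1 | hy1 | hy1
      · exfalso
        refine lob_aux N hN αQ αM γ ls hαQ hαM hγ x' y' x y h2' h3' h4' h2 h3 h4
          (by linarith) (by linarith) ?_
        rw [← hmeq, heq]; ring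
      · exact ⟨heq, hy1⟩
      · exfalso
        refine lob_aux N hN αQ αM γ ls hαQ hαM hγ x y x' y' h2 h3 h4 h2' h3' h4'
          (by linarith) (by linarith) ?_
        rw [← hmeq, heq]; ring
    · exfalso
      have hd : γ * (min (x 1) (y 1) - min (x' 1) (y' 1)) = -((αQ + αM) * (x 1 - x' 1)) := by
        linear_combination h1' - h1
      have hmlt : min (x 1) (y 1) < min (x' 1) (y' 1) := by
        by_contra hcon
        push_neg at hcon
        nlinarith [mul_pos (add_pos hαQ hαM) (sub_pos.mpr hgt),
          mul_nonneg hγ.le (sub_nonneg.mpr hcon)]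
      have hy1' : min (x 1) (y 1) = y 1 := by
        rcases le_total (x 1) (y 1) with h | h
        · exfalso
          have h5 := min_eq_left h
          rw [h5] at hmlt
          linarith [min_le_left (x' 1) (y' 1)]
        · exact min_eq_right h
      have hw1 : y 1 - y' 1 < 0 := by
        rw [hy1'] at hmlt
        linarith [min_le_right (x' 1) (y' 1)]
      exact lob_aux N hN αQ αM γ ls hαQ hαM hγ x' y' x y h2' h3' h4' h2 h3 h4
        (by linarith) hw1 hd
  intro i hi
  induction i, hi using Nat.le_induction with
  | base => exact fun _ => key1
  | succ i hi ih =>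
    intro hiN
    have hiN' : i ≤ N := by omega
    obtain ⟨hxe, hye⟩ := ih hiN'
    have hy3 := h3 i hi (by omega)
    have hy3' := h3' i hi (by omega)
    have hyeq : y (i + 1) = y' (i + 1) := by
      have hmm : αM * y (i + 1) = αM * y' (i + 1) := by
        rw [hy3, hy3', hxe, hye]
      exact mul_left_cancel₀ hαM.ne' hmm
    have hx2 := h2 (i + 1) (by omega) hiN
    have hx2' := h2' (i + 1) (by omega) hiN
    simp only [Nat.add_sub_cancel] at hx2 hx2'
    have hxeq : x (i + 1) = x' (i + 1) := by
      rw [hxe] at hx2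
      rw [← hyeq] at hx2'
      exact min_aff_inj (αQ + αM) γ (x (i + 1)) (x' (i + 1)) (y (i + 1))
        (by linarith) hγ.le (by linarith [hx2, hx2'])
    exact ⟨hxeq, hyeq⟩
end

section
/- In the setting of the iterative scheme of Lemma 5 (with α_Q, α_M, γ, λ_b, λ_s > 0), the sequences (x^{(k)}_i)_k are nondecreasing and bounded above (by (α_M/(α_Q+α_M))^{i-1} λ_b/(α_Q+α_M)) and the sequences (y^{(k)}_i)_k are nonincreasing and bounded below by 0; hence both converge as k → ∞, and the limits (x^∞, y^∞) satisfy the fixed-point system (6). -/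
open Filter

theorem stmt_11 (N : ℕ) (hN : 1 ≤ N) (αQ αM γ lb ls : ℝ)
    (hαQ : 0 < αQ) (hαM : 0 < αM) (hγ : 0 < γ) (hlb : 0 < lb) (hls : 0 < ls)
    (x y : ℕ → ℕ → ℝ)
    (hx0 : ∀ i, 1 ≤ i → i ≤ N → x 0 i = 0)
    (hy0N : y 0 N = ls / (αQ + αM))
    (hy0 : ∀ i, 1 ≤ i → i < N → αM * y 0 (i + 1) = (αQ + αM) * y 0 i)
    (hxk1 : ∀ k, 1 ≤ k →
      lb = (αQ + αM) * x k 1 + γ * min (x k 1) (y (k - 1) 1))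
    (hxki : ∀ k, 1 ≤ k → ∀ i, 2 ≤ i → i ≤ N →
      αM * x k (i - 1) = (αQ + αM) * x k i + γ * min (x k i) (y (k - 1) i))
    (hyki : ∀ k, 1 ≤ k → ∀ i, 1 ≤ i → i < N →
      αM * y k (i + 1) = (αQ + αM) * y k i + γ * min (x k i) (y k i))
    (hykN : ∀ k, 1 ≤ k →
      ls = (αQ + αM) * y k N + γ * min (x k N) (y k N)) :
    (∀ k, ∀ i, 1 ≤ i → i ≤ N →
      x k i ≤ x (k + 1) i ∧
      x k i ≤ (αM / (αQ + αM)) ^ (i - 1) * (lb / (αQ + αM)) ∧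
      y (k + 1) i ≤ y k i ∧ 0 ≤ y k i) ∧
    ∃ x' y' : ℕ → ℝ,
      (∀ i, 1 ≤ i → i ≤ N →
        Filter.Tendsto (fun k => x k i) Filter.atTop (nhds (x' i)) ∧
        Filter.Tendsto (fun k => y k i) Filter.atTop (nhds (y' i))) ∧
      lb = (αQ + αM) * x' 1 + γ * min (x' 1) (y' 1) ∧
      (∀ i, 2 ≤ i → i ≤ N →
        αM * x' (i - 1) = (αQ + αM) * x' i + γ * min (x' i) (y' i)) ∧
      (∀ i, 1 ≤ i → i < N →
        αM * y' (i + 1) = (αQ + αM) * y' i + γ * min (x' i) (y' i)) ∧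
      ls = (αQ + αM) * y' N + γ * min (x' N) (y' N) := by
  have hS : (0:ℝ) < αQ + αM := by linarith
  -- reindexed recursions
  have hxk1' : ∀ k, lb = (αQ + αM) * x (k+1) 1 + γ * min (x (k+1) 1) (y k 1) := by
    intro k; simpa using hxk1 (k+1) (by omega)
  have hxki' : ∀ k, ∀ i, 1 ≤ i → i + 1 ≤ N →
      αM * x (k+1) i = (αQ + αM) * x (k+1) (i+1) + γ * min (x (k+1) (i+1)) (y k (i+1)) := by
    intro k i hi hiN; simpa using hxki (k+1) (by omega) (i+1) (by omega) hiN
  have hyki' : ∀ k, ∀ i, 1 ≤ i → i < N →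
      αM * y (k+1) (i+1) = (αQ + αM) * y (k+1) i + γ * min (x (k+1) i) (y (k+1) i) :=
    fun k i hi hiN => hyki (k+1) (by omega) i hi hiN
  have hykN' : ∀ k, ls = (αQ + αM) * y (k+1) N + γ * min (x (k+1) N) (y (k+1) N) :=
    fun k => hykN (k+1) (by omega)
  -- positivity of y 0
  have hy0aux : ∀ d i, i + d = N → 1 ≤ i → 0 < y 0 i := by
    intro d
    induction d with
    | zero =>
      intro i hiN _
      have hEq : N = i := by omega
      subst hEq
      rw [hy0N]; positivity
    | succ d ih =>
      intro i hiN hi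
      have h1 : 0 < y 0 (i+1) := ih (i+1) (by omega) (by omega)
      have h2 := hy0 i hi (by omega)
      nlinarith
  have hy0pos : ∀ i, 1 ≤ i → i ≤ N → 0 < y 0 i := fun i h1 h2 => hy0aux (N - i) i (by omega) h1
  -- nonnegativity of x (k+1)
  have hxpos : ∀ k i, 1 ≤ i → i ≤ N → 0 ≤ x (k+1) i := by
    intro k i
    induction i with
    | zero => omega
    | succ i ih =>
      intro _ hiN
      rcases Nat.eq_zero_or_pos i with h0 | hpos
      · subst h0
        by_contra h; push_neg at h
        have hm : min (x (k+1) 1) (y k 1) ≤ x (k+1) 1 := min_le_left _ _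
        have := hxk1' k
        nlinarith
      · by_contra h; push_neg at h
        have hprev := ih hpos (by omega)
        have heq := hxki' k i hpos hiN
        have hm : min (x (k+1) (i+1)) (y k (i+1)) ≤ x (k+1) (i+1) := min_le_left _ _
        nlinarith
  have hxnn : ∀ k i, 1 ≤ i → i ≤ N → 0 ≤ x k i := by
    intro k i hi hiN
    cases k with
    | zero => rw [hx0 i hi hiN]
    | succ m => exact hxpos m i hi hiN
  -- nonnegativity of y
  have hyaux : ∀ k d i, i + d = N → 1 ≤ i → 0 ≤ y (k+1) i := by
    intro k d
    induction d with
    | zero =>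
      intro i hiN _
      have hEq : N = i := by omega
      subst hEq
      by_contra h; push_neg at h
      have hm : min (x (k+1) N) (y (k+1) N) ≤ y (k+1) N := min_le_right _ _
      have := hykN' k
      nlinarith
    | succ d ih =>
      intro i hiN hi
      by_contra h; push_neg at h
      have hnext := ih (i+1) (by omega) (by omega)
      have heq := hyki' k i hi (by omega)
      have hm : min (x (k+1) i) (y (k+1) i) ≤ y (k+1) i := min_le_right _ _
      nlinarith
  have hynn : ∀ k i, 1 ≤ i → i ≤ N → 0 ≤ y k i := by
    intro k i hi hiN
    cases k with
    | zero => exact (hy0pos i hi hiN).le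
    | succ m => exact hyaux m (N - i) i (by omega) hi
  -- uniform equations for y (all k)
  have hyeq : ∀ k i, 1 ≤ i → i < N →
      αM * y k (i+1) = (αQ + αM) * y k i + γ * min (x k i) (y k i) := by
    intro k i hi hiN
    cases k with
    | zero =>
      rw [hx0 i hi hiN.le, min_eq_left (hy0pos i hi hiN.le).le]
      have := hy0 i hi hiN
      linarith
    | succ m => exact hyki' m i hi hiN
  have hyNeq : ∀ k, ls = (αQ + αM) * y k N + γ * min (x k N) (y k N) := by
    intro k
    cases k with
    | zero =>
      rw [hx0 N hN le_rfl, min_eq_left (hy0pos N hN le_rfl).le, hy0N]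
      field_simp
      simp
    | succ m => exact hykN' m
  -- upper bound on x
  have hxbd1 : ∀ m i, 1 ≤ i → i ≤ N →
      x (m+1) i ≤ (αM / (αQ + αM)) ^ (i - 1) * (lb / (αQ + αM)) := by
    intro m i
    induction i with
    | zero => omega
    | succ i ih =>
      intro _ hiN
      rcases Nat.eq_zero_or_pos i with h0 | hpos
      · subst h0
        simp only [Nat.sub_self, pow_zero, one_mul]
        have heq := hxk1' m
        have hmn : 0 ≤ min (x (m+1) 1) (y m 1) :=
          le_min (hxpos m 1 le_rfl hiN) (hynn m 1 le_rfl hiN)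
        rw [le_div_iff₀ hS]
        nlinarith [mul_nonneg hγ.le hmn]
      · have hprev := ih hpos (by omega)
        have heq := hxki' m i hpos hiN
        have hmn : 0 ≤ min (x (m+1) (i+1)) (y m (i+1)) :=
          le_min (hxpos m (i+1) (by omega) hiN) (hynn m (i+1) (by omega) hiN)
        have hstep : (αQ + αM) * x (m+1) (i+1) ≤ αM * x (m+1) i := by
          nlinarith [mul_nonneg hγ.le hmn]
        have h1 : x (m+1) (i+1) ≤ αM / (αQ + αM) * x (m+1) i := by
          rw [div_mul_eq_mul_div, le_div_iff₀ hS]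
          linarith
        have hi' : (i+1) - 1 = (i-1) + 1 := by omega
        rw [hi', pow_succ', mul_assoc]
        exact h1.trans (mul_le_mul_of_nonneg_left hprev (by positivity))
  have hxbd : ∀ k i, 1 ≤ i → i ≤ N →
      x k i ≤ (αM / (αQ + αM)) ^ (i - 1) * (lb / (αQ + αM)) := by
    intro k i hi hiN
    cases k with
    | zero => rw [hx0 i hi hiN]; positivity
    | succ m => exact hxbd1 m i hi hiN
  -- x-comparison given y-comparison
  have hmono_x : ∀ k, (∀ i, 1 ≤ i → i ≤ N → y (k+1) i ≤ y k i) →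
      ∀ i, 1 ≤ i → i ≤ N → x (k+1) i ≤ x (k+1+1) i := by
    intro k hy i
    induction i with
    | zero => omega
    | succ i ih =>
      intro _ hiN
      rcases Nat.eq_zero_or_pos i with h0 | hpos
      · subst h0
        by_contra h; push_neg at h
        have h1 := hxk1' k
        have h2 := hxk1' (k+1)
        have hm : min (x (k+1+1) 1) (y (k+1) 1) ≤ min (x (k+1) 1) (y k 1) :=
          min_le_min h.le (hy 1 le_rfl hiN)
        nlinarith [mul_le_mul_of_nonneg_left hm hγ.le]
      · by_contra h; push_neg at h
        have hprev := ih hpos (by omega)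
        have h1 := hxki' k i hpos hiN
        have h2 := hxki' (k+1) i hpos hiN
        have hm : min (x (k+1+1) (i+1)) (y (k+1) (i+1)) ≤ min (x (k+1) (i+1)) (y k (i+1)) :=
          min_le_min h.le (hy (i+1) (by omega) hiN)
        nlinarith [mul_le_mul_of_nonneg_left hm hγ.le]
  -- y-comparison given x-comparison
  have hmono_y : ∀ k, (∀ i, 1 ≤ i → i ≤ N → x k i ≤ x (k+1) i) →
      ∀ i, 1 ≤ i → i ≤ N → y (k+1) i ≤ y k i := by
    intro k hx i hi hiN
    by_contra hcon; push_neg at hcon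
    have key : ∀ d, i + d ≤ N → y k (i+d) < y (k+1) (i+d) := by
      intro d
      induction d with
      | zero => intro _; simpa using hcon
      | succ d ih =>
        intro hdN
        have hlt := ih (by omega)
        have h1 := hyeq k (i+d) (by omega) (by omega)
        have h2 := hyeq (k+1) (i+d) (by omega) (by omega)
        have hm : min (x k (i+d)) (y k (i+d)) ≤ min (x (k+1) (i+d)) (y (k+1) (i+d)) :=
          min_le_min (hx (i+d) (by omega) (by omega)) hlt.le
        have hstep : αM * y k (i+d+1) < αM * y (k+1) (i+d+1) := by
          nlinarith [mul_le_mul_of_nonneg_left hm hγ.le]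
        have hrw : i + (d+1) = (i+d) + 1 := by omega
        rw [hrw]
        exact lt_of_mul_lt_mul_left hstep hαM.le
    have hNlt := key (N - i) (by omega)
    rw [show i + (N - i) = N by omega] at hNlt
    have h1 := hyNeq k
    have h2 := hyNeq (k+1)
    have hm : min (x k N) (y k N) ≤ min (x (k+1) N) (y (k+1) N) :=
      min_le_min (hx N hN le_rfl) hNlt.le
    nlinarith [mul_le_mul_of_nonneg_left hm hγ.le]
  have hx01 : ∀ i, 1 ≤ i → i ≤ N → x 0 i ≤ x (0+1) i := by
    intro i hi hiN
    rw [hx0 i hi hiN]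
    exact hxpos 0 i hi hiN
  have Qy : ∀ k, ∀ i, 1 ≤ i → i ≤ N → y (k+1) i ≤ y k i := by
    intro k
    induction k with
    | zero => exact hmono_y 0 hx01
    | succ m ih => exact hmono_y (m+1) (hmono_x m ih)
  have Qx : ∀ k i, 1 ≤ i → i ≤ N → x k i ≤ x (k+1) i := by
    intro k
    cases k with
    | zero => exact hx01
    | succ m => exact hmono_x m (Qy m)
  -- convergence
  have hxt : ∀ i, 1 ≤ i → i ≤ N →
      Tendsto (fun k => x k i) atTop (nhds (⨆ k, x k i)) := by
    intro i hi hiN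
    apply tendsto_atTop_ciSup (monotone_nat_of_le_succ (fun k => Qx k i hi hiN))
    exact ⟨(αM / (αQ + αM)) ^ (i - 1) * (lb / (αQ + αM)), by
      rintro _ ⟨k, rfl⟩; exact hxbd k i hi hiN⟩
  have hyt : ∀ i, 1 ≤ i → i ≤ N →
      Tendsto (fun k => y k i) atTop (nhds (⨅ k, y k i)) := by
    intro i hi hiN
    apply tendsto_atTop_ciInf (antitone_nat_of_succ_le (fun k => Qy k i hi hiN))
    exact ⟨0, by rintro _ ⟨k, rfl⟩; exact hynn k i hi hiN⟩
  refine ⟨fun k i hi hiN => ⟨Qx k i hi hiN, hxbd k i hi hiN, Qy k i hi hiN, hynn k i hi hiN⟩,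
    fun i => ⨆ k, x k i, fun i => ⨅ k, y k i,
    fun i hi hiN => ⟨hxt i hi hiN, hyt i hi hiN⟩, ?_, ?_, ?_, ?_⟩
  · -- first equation
    have hL : Tendsto (fun k => x (k+1) 1) atTop (nhds (⨆ k, x k 1)) :=
      (hxt 1 le_rfl hN).comp (tendsto_add_atTop_nat 1)
    have hM := hyt 1 le_rfl hN
    have hrhs : Tendsto (fun k => (αQ + αM) * x (k+1) 1 + γ * min (x (k+1) 1) (y k 1)) atTop
        (nhds ((αQ + αM) * (⨆ k, x k 1) + γ * min (⨆ k, x k 1) (⨅ k, y k 1))) :=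
      (tendsto_const_nhds.mul hL).add (tendsto_const_nhds.mul (hL.min hM))
    exact tendsto_nhds_unique tendsto_const_nhds ((tendsto_congr hxk1').mpr hrhs)
  · -- interior x equations
    intro i hi2 hiN
    obtain ⟨j, rfl⟩ : ∃ j, i = j + 1 := ⟨i - 1, by omega⟩
    simp only [Nat.add_sub_cancel]
    have hj1 : 1 ≤ j := by omega
    have hL1 : Tendsto (fun k => x (k+1) j) atTop (nhds (⨆ k, x k j)) :=
      (hxt j hj1 (by omega)).comp (tendsto_add_atTop_nat 1)
    have hL2 : Tendsto (fun k => x (k+1) (j+1)) atTop (nhds (⨆ k, x k (j+1))) :=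
      (hxt (j+1) (by omega) hiN).comp (tendsto_add_atTop_nat 1)
    have hM := hyt (j+1) (by omega) hiN
    have hlhs : Tendsto (fun k => αM * x (k+1) j) atTop (nhds (αM * ⨆ k, x k j)) :=
      tendsto_const_nhds.mul hL1
    have hrhs : Tendsto
        (fun k => (αQ + αM) * x (k+1) (j+1) + γ * min (x (k+1) (j+1)) (y k (j+1))) atTop
        (nhds ((αQ + αM) * (⨆ k, x k (j+1)) + γ * min (⨆ k, x k (j+1)) (⨅ k, y k (j+1)))) :=
      (tendsto_const_nhds.mul hL2).add (tendsto_const_nhds.mul (hL2.min hM))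
    exact tendsto_nhds_unique hlhs
      ((tendsto_congr (fun k => hxki' k j hj1 hiN)).mpr hrhs)
  · -- y equations
    intro i hi hiN
    have hL : Tendsto (fun k => x (k+1) i) atTop (nhds (⨆ k, x k i)) :=
      (hxt i hi hiN.le).comp (tendsto_add_atTop_nat 1)
    have hM1 : Tendsto (fun k => y (k+1) i) atTop (nhds (⨅ k, y k i)) :=
      (hyt i hi hiN.le).comp (tendsto_add_atTop_nat 1)
    have hM2 : Tendsto (fun k => y (k+1) (i+1)) atTop (nhds (⨅ k, y k (i+1))) :=
      (hyt (i+1) (by omega) hiN).comp (tendsto_add_atTop_nat 1)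
    have hlhs : Tendsto (fun k => αM * y (k+1) (i+1)) atTop (nhds (αM * ⨅ k, y k (i+1))) :=
      tendsto_const_nhds.mul hM2
    have hrhs : Tendsto
        (fun k => (αQ + αM) * y (k+1) i + γ * min (x (k+1) i) (y (k+1) i)) atTop
        (nhds ((αQ + αM) * (⨅ k, y k i) + γ * min (⨆ k, x k i) (⨅ k, y k i))) :=
      (tendsto_const_nhds.mul hM1).add (tendsto_const_nhds.mul (hL.min hM1))
    exact tendsto_nhds_unique hlhs
      ((tendsto_congr (fun k => hyki' k i hi hiN)).mpr hrhs)
  · -- last equation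
    have hL : Tendsto (fun k => x (k+1) N) atTop (nhds (⨆ k, x k N)) :=
      (hxt N hN le_rfl).comp (tendsto_add_atTop_nat 1)
    have hM : Tendsto (fun k => y (k+1) N) atTop (nhds (⨅ k, y k N)) :=
      (hyt N hN le_rfl).comp (tendsto_add_atTop_nat 1)
    have hrhs : Tendsto (fun k => (αQ + αM) * y (k+1) N + γ * min (x (k+1) N) (y (k+1) N)) atTop
        (nhds ((αQ + αM) * (⨅ k, y k N) + γ * min (⨆ k, x k N) (⨅ k, y k N))) :=
      (tendsto_const_nhds.mul hM).add (tendsto_const_nhds.mul (hL.min hM))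
    exact tendsto_nhds_unique tendsto_const_nhds ((tendsto_congr hykN').mpr hrhs)
end

section
/- Let α_Q, α_M, γ > 0, λ > 0, N ≥ 1, and let y, y' ∈ ℝ^N be nonnegative vectors with y_i ≤ y'_i for all i. Let x solve λ = (α_Q+α_M)x_1 + γ min(x_1,y_1) and α_M x_{i-1} = (α_Q+α_M)x_i + γ min(x_i,y_i) for 1 < i ≤ N, and let x' solve the same system with y replaced by y'. Then x_i ≥ x'_i for all i. -/
lemma key_13 (A γ : ℝ) (hA : 0 < A) (hγ : 0 < γ) (t t' s s' c c' : ℝ)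
    (hs : s ≤ s') (hc : c' ≤ c)
    (h1 : c = A * t + γ * min t s) (h2 : c' = A * t' + γ * min t' s') :
    t' ≤ t := by
  by_contra h
  push_neg at h
  have hmin : min t s ≤ min t' s' := min_le_min h.le hs
  nlinarith [mul_le_mul_of_nonneg_left hmin hγ.le]

theorem stmt_13 (N : ℕ) (hN : 1 ≤ N) (αQ αM γ lam : ℝ)
    (hαQ : 0 < αQ) (hαM : 0 < αM) (hγ : 0 < γ) (hl : 0 < lam)
    (y y' x x' : ℕ → ℝ)
    (hy : ∀ i, 1 ≤ i → i ≤ N → 0 ≤ y i)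
    (hy' : ∀ i, 1 ≤ i → i ≤ N → 0 ≤ y' i)
    (hle : ∀ i, 1 ≤ i → i ≤ N → y i ≤ y' i)
    (hx1 : lam = (αQ + αM) * x 1 + γ * min (x 1) (y 1))
    (hxi : ∀ i, 2 ≤ i → i ≤ N →
      αM * x (i - 1) = (αQ + αM) * x i + γ * min (x i) (y i))
    (hx1' : lam = (αQ + αM) * x' 1 + γ * min (x' 1) (y' 1))
    (hxi' : ∀ i, 2 ≤ i → i ≤ N →
      αM * x' (i - 1) = (αQ + αM) * x' i + γ * min (x' i) (y' i)) :
    ∀ i, 1 ≤ i → i ≤ N → x' i ≤ x i := by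
  have hA : 0 < αQ + αM := by linarith
  intro i
  induction i with
  | zero => intro h; omega
  | succ n ih =>
    intro _ hiN
    rcases Nat.eq_zero_or_pos n with hn | hn
    · subst hn
      exact key_13 (αQ + αM) γ hA hγ _ _ _ _ lam lam (hle 1 le_rfl hiN) le_rfl hx1 hx1'
    · have h2 : 2 ≤ n + 1 := by omega
      have hxn : x' n ≤ x n := ih hn (by omega)
      have e1 := hxi (n + 1) h2 hiN
      have e2 := hxi' (n + 1) h2 hiN
      simp only [Nat.add_sub_cancel] at e1 e2
      exact key_13 (αQ + αM) γ hA hγ _ _ _ _ _ _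
        (hle (n + 1) (by omega) hiN)
        (mul_le_mul_of_nonneg_left hxn hαM.le) e1 e2
end

section
/- Let α_Q, α_M, γ, λ_b, λ_s > 0 with λ_b = λ_s = λ, and let (x*, y*) be the positive solution of the fixed-point system (6). Then by symmetry x*_i = y*_{N+1−i} for all 1 ≤ i ≤ N. In particular, if N is even with N = 2m, then x*_i > y*_i for i ≤ m and x*_i < y*_i for i > m. -/
/-- Mirrored difference sequence `a i = x i - y (N+1-i)` (with `a 0 = 0`). -/
private def lobA (N : ℕ) (x y : ℕ → ℝ) : ℕ → ℝ :=
  fun n => if n = 0 then 0 else x n - y (N + 1 - n)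

private lemma lobA_zero (N : ℕ) (x y : ℕ → ℝ) : lobA N x y 0 = 0 := rfl

private lemma lobA_ne (N : ℕ) (x y : ℕ → ℝ) {n : ℕ} (hn : n ≠ 0) :
    lobA N x y n = x n - y (N + 1 - n) := by simp [lobA, hn]

/-- `y` is strictly increasing on `[1,N]`. -/
private lemma lob_ymono (N : ℕ) (αQ αM γ : ℝ) (hαQ : 0 < αQ) (hαM : 0 < αM) (hγ : 0 < γ)
    (x y : ℕ → ℝ)
    (hx : ∀ i, 1 ≤ i → i ≤ N → 0 < x i)
    (hy : ∀ i, 1 ≤ i → i ≤ N → 0 < y i)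
    (h3 : ∀ i, 1 ≤ i → i < N →
      αM * y (i + 1) = (αQ + αM) * y i + γ * min (x i) (y i)) :
    ∀ i j, 1 ≤ i → i < j → j ≤ N → y i < y j := by
  have hstep : ∀ j, 1 ≤ j → j < N → y j < y (j + 1) := by
    intro j h1j hjN
    have hmin : 0 < min (x j) (y j) := lt_min (hx j h1j hjN.le) (hy j h1j hjN.le)
    have hyj : 0 < y j := hy j h1j hjN.le
    have := h3 j h1j hjN
    nlinarith
  intro i j h1i hij
  induction j, hij using Nat.le_induction with
  | base => intro h; exact hstep i h1i (by omega)
  | succ j hj IH =>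
    intro hjN
    exact lt_trans (IH (by omega)) (hstep j (by omega) (by omega))

/-- `x` is strictly decreasing on `[1,N]`. -/
private lemma lob_xmono (N : ℕ) (αQ αM γ : ℝ) (hαQ : 0 < αQ) (hαM : 0 < αM) (hγ : 0 < γ)
    (x y : ℕ → ℝ)
    (hx : ∀ i, 1 ≤ i → i ≤ N → 0 < x i)
    (hy : ∀ i, 1 ≤ i → i ≤ N → 0 < y i)
    (h2 : ∀ i, 2 ≤ i → i ≤ N →
      αM * x (i - 1) = (αQ + αM) * x i + γ * min (x i) (y i)) :
    ∀ i j, 1 ≤ i → i < j → j ≤ N → x j < x i := by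
  have hstep : ∀ j, 1 ≤ j → j < N → x (j + 1) < x j := by
    intro j h1j hjN
    have hmin : 0 < min (x (j + 1)) (y (j + 1)) :=
      lt_min (hx (j + 1) (by omega) (by omega)) (hy (j + 1) (by omega) (by omega))
    have hxj : 0 < x (j + 1) := hx (j + 1) (by omega) (by omega)
    have h := h2 (j + 1) (by omega) (by omega)
    simp only [Nat.add_sub_cancel] at h
    nlinarith
  intro i j h1i hij
  induction j, hij using Nat.le_induction with
  | base => intro h; exact hstep i h1i (by omega)
  | succ j hj IH =>
    intro hjN
    exact lt_trans (hstep j (by omega) (by omega)) (IH (by omega))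
/-- Key identity: the equation for `x` at `i` minus the equation for `y` at `N+1-i`. -/
private lemma lob_ki (N : ℕ) (αQ αM γ lam : ℝ) (x y : ℕ → ℝ)
    (h1 : lam = (αQ + αM) * x 1 + γ * min (x 1) (y 1))
    (h2 : ∀ i, 2 ≤ i → i ≤ N →
      αM * x (i - 1) = (αQ + αM) * x i + γ * min (x i) (y i))
    (h3 : ∀ i, 1 ≤ i → i < N →
      αM * y (i + 1) = (αQ + αM) * y i + γ * min (x i) (y i))
    (h4 : lam = (αQ + αM) * y N + γ * min (x N) (y N)) :
    ∀ i, 1 ≤ i → i ≤ N →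
      (αQ + αM) * lobA N x y i = αM * lobA N x y (i - 1) +
        γ * (min (x (N + 1 - i)) (y (N + 1 - i)) - min (x i) (y i)) := by
  intro i h1i hiN
  rcases eq_or_lt_of_le h1i with h1e | h2i
  · cases h1e
    rw [lobA_ne N x y (by omega : (1:ℕ) ≠ 0)]
    have e1 : N + 1 - 1 = N := by omega
    have e0 : (1:ℕ) - 1 = 0 := rfl
    rw [e1, e0, lobA_zero]
    linarith [h1, h4]
  · have h2i' : 2 ≤ i := h2i
    have hx2 := h2 i h2i' hiN
    have hy3 := h3 (N + 1 - i) (by omega) (by omega)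
    have e1 : N + 1 - i + 1 = N + 1 - (i - 1) := by omega
    rw [e1] at hy3
    rw [lobA_ne N x y (by omega : i ≠ 0), lobA_ne N x y (by omega : i - 1 ≠ 0)]
    linarith [hx2, hy3]
/-- An asymmetric threshold configuration (`k + l ≥ N + 1`) is impossible. -/
private lemma lob_contra (N : ℕ) (αQ αM γ lam : ℝ)
    (hαQ : 0 < αQ) (hαM : 0 < αM) (hγ : 0 < γ)
    (x y : ℕ → ℝ)
    (hx : ∀ i, 1 ≤ i → i ≤ N → 0 < x i)
    (hy : ∀ i, 1 ≤ i → i ≤ N → 0 < y i)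
    (h1 : lam = (αQ + αM) * x 1 + γ * min (x 1) (y 1))
    (h2 : ∀ i, 2 ≤ i → i ≤ N →
      αM * x (i - 1) = (αQ + αM) * x i + γ * min (x i) (y i))
    (h3 : ∀ i, 1 ≤ i → i < N →
      αM * y (i + 1) = (αQ + αM) * y i + γ * min (x i) (y i))
    (h4 : lam = (αQ + αM) * y N + γ * min (x N) (y N))
    (k l : ℕ) (hkN : k ≤ N) (hlN : l ≤ N)
    (hkc : ∀ i, 1 ≤ i → i ≤ N → (y i < x i ↔ i ≤ k))
    (hlc : ∀ i, 1 ≤ i → i ≤ N → (y i ≤ x i ↔ i ≤ l))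
    (hsum : N + 1 ≤ k + l) : False := by
  set a : ℕ → ℝ := lobA N x y with ha
  have hc : 0 < αQ + αM := by linarith
  have hcγ : 0 < αQ + αM + γ := by linarith
  have hkl : k ≤ l := by
    rcases Nat.eq_zero_or_pos k with h | h
    · omega
    · have hk1 : 1 ≤ k := h
      have := (hlc k hk1 hkN).1 ((hkc k hk1 hkN).2 le_rfl).le
      exact this
  have hl1 : 1 ≤ l := by omega
  have h2l : N + 1 ≤ 2 * l := by omega
  have ymono := lob_ymono N αQ αM γ hαQ hαM hγ x y hx hy h3
  have ymole : ∀ i j, 1 ≤ i → i ≤ j → j ≤ N → y i ≤ y j := by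
    intro i j h1i hij hjN
    rcases eq_or_lt_of_le hij with h | h
    · cases h; exact le_rfl
    · exact (ymono i j h1i h hjN).le
  have ki := lob_ki N αQ αM γ lam x y h1 h2 h3 h4
  rw [← ha] at ki
  have minY : ∀ i, 1 ≤ i → i ≤ l → min (x i) (y i) = y i := by
    intro i h1i hil
    exact min_eq_right ((hlc i h1i (by omega)).2 hil)
  have minX : ∀ i, k < i → i ≤ N → min (x i) (y i) = x i := by
    intro i hki hiN
    have h1i : 1 ≤ i := by omega
    exact min_eq_left (le_of_not_gt (fun hcon => by
      have := (hkc i h1i hiN).1 hcon; omega))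
  -- top region equation
  have topEq : ∀ i, l + 1 ≤ i → i ≤ N →
      (αQ + αM + γ) * a i = αM * a (i - 1) := by
    intro i hli hiN
    have hki := ki i (by omega) hiN
    rw [minX i (by omega) hiN, minY (N + 1 - i) (by omega) (by omega)] at hki
    have hai : a i = x i - y (N + 1 - i) := by
      rw [ha]; exact lobA_ne N x y (by omega)
    rw [hai] at hki ⊢
    linarith
  -- seed positivity
  have seed : 0 < a l := by
    rw [ha, lobA_ne N x y (by omega : l ≠ 0)]
    rcases eq_or_lt_of_le (by omega : N + 1 - l ≤ l) with h | h
    · -- N + 1 - l = l, so 2l = N+1 and l ≤ k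
      have hlk : l ≤ k := by omega
      have := (hkc l hl1 hlN).2 hlk
      rw [h]; linarith
    · have hyy : y (N + 1 - l) < y l := ymono (N + 1 - l) l (by omega) h hlN
      have hxy : y l ≤ x l := (hlc l hl1 hlN).2 le_rfl
      linarith
  -- positivity on the top region
  have posTop : ∀ i, l ≤ i → i ≤ N → 0 < a i := by
    intro i hli
    induction i, hli using Nat.le_induction with
    | base => intro _; exact seed
    | succ i hi IH =>
      intro hiN
      have ht := topEq (i + 1) (by omega) hiN
      simp only [Nat.add_sub_cancel] at ht
      have hpos := IH (by omega)
      nlinarith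
  -- bottom region equation
  have botEq : ∀ i, 1 ≤ i → i ≤ N - l →
      (αQ + αM) * a i = αM * a (i - 1) + γ * a (N + 1 - i) := by
    intro i h1i hil
    have hki := ki i h1i (by omega)
    rw [minY i h1i (by omega), minX (N + 1 - i) (by omega) (by omega)] at hki
    have e1 : a (N + 1 - i) = x (N + 1 - i) - y i := by
      rw [ha, lobA_ne N x y (by omega : N + 1 - i ≠ 0)]
      congr 2
      omega
    rw [e1]
    linarith
  -- nonnegativity on the bottom region
  have posBot : ∀ i, i ≤ N - l → 0 ≤ a i := by
    intro i
    induction i with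
    | zero => intro _; rw [ha, lobA_zero]
    | succ i IH =>
      intro hile
      have hb := botEq (i + 1) (by omega) hile
      simp only [Nat.add_sub_cancel] at hb
      have h1 : 0 ≤ a i := IH (by omega)
      have e2 : N + 1 - (i + 1) = N - i := by omega
      rw [e2] at hb
      have h2 : 0 < a (N - i) := posTop (N - i) (by omega) (by omega)
      nlinarith
  -- powers
  have hMc : αM ≤ αQ + αM := by linarith
  -- the key decaying inequality
  have key : ∀ i, N ≤ 2 * i → i ≤ N →
      (αQ + αM) ^ (2 * i - N) * a i ≤ αM ^ (2 * i - N) * a (N - i) := by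
    intro i
    induction i using Nat.strong_induction_on with
    | _ i IH =>
      intro hNi hiN
      rcases (by omega : 2 * i = N ∨ 2 * i = N + 1 ∨ N + 2 ≤ 2 * i) with hb1 | hb2 | hstep
      · have e : 2 * i - N = 0 := by omega
        have e2 : N - i = i := by omega
        rw [e, e2, pow_zero, pow_zero]
      · have e : 2 * i - N = 1 := by omega
        have h1i : 1 ≤ i := by omega
        have hki := ki i h1i hiN
        have e2 : N + 1 - i = i := by omega
        rw [e2] at hki
        have e3 : N - i = i - 1 := by omega
        rw [e, e3, pow_one, pow_one]
        linarith
      · -- inductive step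
        have h1i : 1 ≤ i := by omega
        obtain ⟨e, he⟩ : ∃ e, 2 * i - N = e + 2 := ⟨2 * i - N - 2, by omega⟩
        have he' : 2 * (i - 1) - N = e := by omega
        have IH' := IH (i - 1) (by omega) (by omega) (by omega)
        rw [he'] at IH'
        have eN : N - (i - 1) = N + 1 - i := by omega
        rw [eN] at IH'
        rw [he]
        have hMc' : αM ^ (e + 1) ≤ (αQ + αM) ^ (e + 1) :=
          pow_le_pow_left₀ hαM.le hMc (e + 1)
        have hMp : (0:ℝ) < αM ^ (e + 1) := pow_pos hαM _
        have hcp : (0:ℝ) < (αQ + αM) ^ (e + 1) := pow_pos hc _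
        have hmul : αM * (αQ + αM) * ((αQ + αM) ^ e * a (i - 1)) ≤
            αM * (αQ + αM) * (αM ^ e * a (N + 1 - i)) := by
          apply mul_le_mul_of_nonneg_left IH' (by positivity)
        rcases le_or_gt (l + 1) i with htop | hband
        · -- top-type step
          have hU := topEq i htop hiN
          have hL := botEq (N + 1 - i) (by omega) (by omega)
          have eL1 : N + 1 - i - 1 = N - i := by omega
          have eL2 : N + 1 - (N + 1 - i) = i := by omega
          rw [eL1, eL2] at hL
          have hposai : 0 < a i := posTop i (by omega) hiN
          -- chain the inequalities
          have lhs_eq : αM * (αQ + αM) * ((αQ + αM) ^ e * a (i - 1)) =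
              (αQ + αM) ^ (e + 1) * (αM * a (i - 1)) := by ring
          have rhs_eq : αM * (αQ + αM) * (αM ^ e * a (N + 1 - i)) =
              αM ^ (e + 1) * ((αQ + αM) * a (N + 1 - i)) := by ring
          rw [lhs_eq, rhs_eq, hL, ← hU] at hmul
          -- hmul : (αQ+αM)^(e+1) * ((αQ+αM+γ) * a i) ≤ αM^(e+1)*(αM * a (N-i) + γ * a i)
          have hdrop : γ * (αM ^ (e + 1) * a i) ≤ γ * ((αQ + αM) ^ (e + 1) * a i) := by
            apply mul_le_mul_of_nonneg_left _ hγ.le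
            exact mul_le_mul_of_nonneg_right hMc' hposai.le
          have expand1 : (αQ + αM) ^ (e + 1) * ((αQ + αM + γ) * a i) =
              (αQ + αM) ^ (e + 2) * a i + γ * ((αQ + αM) ^ (e + 1) * a i) := by ring
          have expand2 : αM ^ (e + 1) * (αM * a (N - i) + γ * a i) =
              αM ^ (e + 2) * a (N - i) + γ * (αM ^ (e + 1) * a i) := by ring
          rw [expand1, expand2] at hmul
          linarith
        · -- band-type step
          have hU := ki i h1i hiN
          rw [minY i h1i (by omega), minY (N + 1 - i) (by omega) (by omega)] at hU
          have hL := ki (N + 1 - i) (by omega) (by omega)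
          rw [minY (N + 1 - i) (by omega) (by omega)] at hL
          have eL2 : N + 1 - (N + 1 - i) = i := by omega
          rw [eL2] at hL
          rw [minY i h1i (by omega)] at hL
          have eL1 : N + 1 - i - 1 = N - i := by omega
          rw [eL1] at hL
          -- hU : c * a i = αM * a (i-1) + γ * (y (N+1-i) - y i)
          -- hL : c * a (N+1-i) = αM * a (N-i) + γ * (y i - y (N+1-i))
          have hW : 0 ≤ y i - y (N + 1 - i) :=
            sub_nonneg.2 (ymole (N + 1 - i) i (by omega) (by omega) hiN)
          have lhs_eq : αM * (αQ + αM) * ((αQ + αM) ^ e * a (i - 1)) =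
              (αQ + αM) ^ (e + 1) * (αM * a (i - 1)) := by ring
          have rhs_eq : αM * (αQ + αM) * (αM ^ e * a (N + 1 - i)) =
              αM ^ (e + 1) * ((αQ + αM) * a (N + 1 - i)) := by ring
          rw [lhs_eq, rhs_eq, hL] at hmul
          have hU' : αM * a (i - 1) =
              (αQ + αM) * a i + γ * (y i - y (N + 1 - i)) := by linarith
          rw [hU'] at hmul
          have hdrop : γ * (αM ^ (e + 1) * (y i - y (N + 1 - i))) ≤
              γ * ((αQ + αM) ^ (e + 1) * (y i - y (N + 1 - i))) := by
            apply mul_le_mul_of_nonneg_left _ hγ.le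
            exact mul_le_mul_of_nonneg_right hMc' hW
          have expand1 : (αQ + αM) ^ (e + 1) *
              ((αQ + αM) * a i + γ * (y i - y (N + 1 - i))) =
              (αQ + αM) ^ (e + 2) * a i +
                γ * ((αQ + αM) ^ (e + 1) * (y i - y (N + 1 - i))) := by ring
          have expand2 : αM ^ (e + 1) *
              (αM * a (N - i) + γ * (y i - y (N + 1 - i))) =
              αM ^ (e + 2) * a (N - i) +
                γ * (αM ^ (e + 1) * (y i - y (N + 1 - i))) := by ring
          rw [expand1, expand2] at hmul
          linarith
  -- final contradiction
  have hfin := key N (by omega) le_rfl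
  have eN : 2 * N - N = N := by omega
  have eZ : N - N = 0 := by omega
  have ha0 : a 0 = 0 := by rw [ha]; exact lobA_zero N x y
  rw [eN, eZ, ha0] at hfin
  have hcN : (0:ℝ) < (αQ + αM) ^ N := pow_pos hc N
  have haN : a N ≤ 0 := by nlinarith
  exact absurd (posTop N hlN le_rfl) (not_lt.2 haN)
/-- In the balanced configuration `k + l = N`, the solution is symmetric. -/
private lemma lob_caseA (N : ℕ) (αQ αM γ lam : ℝ)
    (hαQ : 0 < αQ) (hαM : 0 < αM) (hγ : 0 < γ)
    (x y : ℕ → ℝ)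
    (hx : ∀ i, 1 ≤ i → i ≤ N → 0 < x i)
    (hy : ∀ i, 1 ≤ i → i ≤ N → 0 < y i)
    (h1 : lam = (αQ + αM) * x 1 + γ * min (x 1) (y 1))
    (h2 : ∀ i, 2 ≤ i → i ≤ N →
      αM * x (i - 1) = (αQ + αM) * x i + γ * min (x i) (y i))
    (h3 : ∀ i, 1 ≤ i → i < N →
      αM * y (i + 1) = (αQ + αM) * y i + γ * min (x i) (y i))
    (h4 : lam = (αQ + αM) * y N + γ * min (x N) (y N))
    (k l : ℕ) (hkN : k ≤ N) (hlN : l ≤ N)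
    (hkc : ∀ i, 1 ≤ i → i ≤ N → (y i < x i ↔ i ≤ k))
    (hlc : ∀ i, 1 ≤ i → i ≤ N → (y i ≤ x i ↔ i ≤ l))
    (hsum : k + l = N) :
    ∀ i, 1 ≤ i → i ≤ N → x i = y (N + 1 - i) := by
  set a : ℕ → ℝ := lobA N x y with ha
  have hc : 0 < αQ + αM := by linarith
  have hcγ : 0 < αQ + αM + γ := by linarith
  have hkl : k ≤ l := by
    rcases Nat.eq_zero_or_pos k with h | h
    · omega
    · exact (hlc k h hkN).1 ((hkc k h hkN).2 le_rfl).le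
  have h2k : 2 * k ≤ N := by omega
  have ki := lob_ki N αQ αM γ lam x y h1 h2 h3 h4
  rw [← ha] at ki
  have minY : ∀ i, 1 ≤ i → i ≤ l → min (x i) (y i) = y i := by
    intro i h1i hil
    exact min_eq_right ((hlc i h1i (by omega)).2 hil)
  have minX : ∀ i, k < i → i ≤ N → min (x i) (y i) = x i := by
    intro i hki hiN
    have h1i : 1 ≤ i := by omega
    exact min_eq_left (le_of_not_gt (fun hcon => by
      have := (hkc i h1i hiN).1 hcon; omega))
  have ha0 : a 0 = 0 := by rw [ha]; exact lobA_zero N x y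
  -- top region equation (valid for k+1 ≤ i ≤ N)
  have topEq : ∀ i, k + 1 ≤ i → i ≤ N →
      (αQ + αM + γ) * a i = αM * a (i - 1) := by
    intro i hki' hiN
    have hki := ki i (by omega) hiN
    rw [minX i (by omega) hiN, minY (N + 1 - i) (by omega) (by omega)] at hki
    have hai : a i = x i - y (N + 1 - i) := by
      rw [ha]; exact lobA_ne N x y (by omega)
    rw [hai] at hki ⊢
    linarith
  -- bottom region equation (valid for 1 ≤ i ≤ l)
  have botEq : ∀ i, 1 ≤ i → i ≤ l →
      (αQ + αM) * a i = αM * a (i - 1) + γ * a (N + 1 - i) := by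
    intro i h1i hil
    have hki := ki i h1i (by omega)
    rw [minY i h1i (by omega), minX (N + 1 - i) (by omega) (by omega)] at hki
    have e1 : a (N + 1 - i) = x (N + 1 - i) - y i := by
      rw [ha, lobA_ne N x y (by omega : N + 1 - i ≠ 0)]
      congr 2
      omega
    rw [e1]
    linarith
  have hMc : αM ≤ αQ + αM := by linarith
  -- the key decaying inequality with absolute values
  have key : ∀ i, N ≤ 2 * i → i ≤ N →
      (αQ + αM) ^ (2 * i - N) * |a i| ≤ αM ^ (2 * i - N) * |a (N - i)| := by
    intro i
    induction i using Nat.strong_induction_on with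
    | _ i IH =>
      intro hNi hiN
      rcases (by omega : 2 * i = N ∨ 2 * i = N + 1 ∨ N + 2 ≤ 2 * i) with hb1 | hb2 | hstep
      · have e : 2 * i - N = 0 := by omega
        have e2 : N - i = i := by omega
        rw [e, e2, pow_zero, pow_zero]
      · have e : 2 * i - N = 1 := by omega
        have h1i : 1 ≤ i := by omega
        have hki := ki i h1i hiN
        have e2 : N + 1 - i = i := by omega
        rw [e2] at hki
        have e3 : N - i = i - 1 := by omega
        rw [e, e3, pow_one, pow_one]
        have hki' : (αQ + αM) * a i = αM * a (i - 1) := by linarith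
        refine le_of_eq ?_
        calc (αQ + αM) * |a i| = |(αQ + αM) * a i| := by
              rw [abs_mul, abs_of_pos hc]
          _ = |αM * a (i - 1)| := by rw [hki']
          _ = αM * |a (i - 1)| := by rw [abs_mul, abs_of_pos hαM]
      · -- inductive step (all steps are top/bottom type here)
        have h1i : 1 ≤ i := by omega
        obtain ⟨e, he⟩ : ∃ e, 2 * i - N = e + 2 := ⟨2 * i - N - 2, by omega⟩
        have he' : 2 * (i - 1) - N = e := by omega
        have IH' := IH (i - 1) (by omega) (by omega) (by omega)
        rw [he'] at IH'
        have eN : N - (i - 1) = N + 1 - i := by omega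
        rw [eN] at IH'
        rw [he]
        have hMc' : αM ^ (e + 1) ≤ (αQ + αM) ^ (e + 1) :=
          pow_le_pow_left₀ hαM.le hMc (e + 1)
        have hik : k + 1 ≤ i := by omega
        have hU := topEq i hik hiN
        have hL := botEq (N + 1 - i) (by omega) (by omega)
        have eL1 : N + 1 - i - 1 = N - i := by omega
        have eL2 : N + 1 - (N + 1 - i) = i := by omega
        rw [eL1, eL2] at hL
        have hU' : (αQ + αM + γ) * |a i| = αM * |a (i - 1)| := by
          calc (αQ + αM + γ) * |a i| = |(αQ + αM + γ) * a i| := by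
                rw [abs_mul, abs_of_pos hcγ]
            _ = |αM * a (i - 1)| := by rw [hU]
            _ = αM * |a (i - 1)| := by rw [abs_mul, abs_of_pos hαM]
        have hL' : (αQ + αM) * |a (N + 1 - i)| ≤ αM * |a (N - i)| + γ * |a i| := by
          calc (αQ + αM) * |a (N + 1 - i)| = |(αQ + αM) * a (N + 1 - i)| := by
                rw [abs_mul, abs_of_pos hc]
            _ = |αM * a (N - i) + γ * a i| := by rw [hL]
            _ ≤ |αM * a (N - i)| + |γ * a i| := abs_add_le _ _
            _ = αM * |a (N - i)| + γ * |a i| := by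
                rw [abs_mul, abs_mul, abs_of_pos hαM, abs_of_pos hγ]
        have hmul : αM * (αQ + αM) * ((αQ + αM) ^ e * |a (i - 1)|) ≤
            αM * (αQ + αM) * (αM ^ e * |a (N + 1 - i)|) := by
          apply mul_le_mul_of_nonneg_left IH' (by positivity)
        have lhs_eq : αM * (αQ + αM) * ((αQ + αM) ^ e * |a (i - 1)|) =
            (αQ + αM) ^ (e + 1) * (αM * |a (i - 1)|) := by ring
        rw [lhs_eq, ← hU'] at hmul
        have hstep2 : αM * (αQ + αM) * (αM ^ e * |a (N + 1 - i)|) ≤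
            αM ^ (e + 1) * (αM * |a (N - i)| + γ * |a i|) := by
          have : αM * (αQ + αM) * (αM ^ e * |a (N + 1 - i)|) =
              αM ^ (e + 1) * ((αQ + αM) * |a (N + 1 - i)|) := by ring
          rw [this]
          exact mul_le_mul_of_nonneg_left hL' (by positivity)
        have hdrop : γ * (αM ^ (e + 1) * |a i|) ≤ γ * ((αQ + αM) ^ (e + 1) * |a i|) := by
          apply mul_le_mul_of_nonneg_left _ hγ.le
          exact mul_le_mul_of_nonneg_right hMc' (abs_nonneg _)
        have expand1 : (αQ + αM) ^ (e + 1) * ((αQ + αM + γ) * |a i|) =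
            (αQ + αM) ^ (e + 2) * |a i| + γ * ((αQ + αM) ^ (e + 1) * |a i|) := by ring
        have expand2 : αM ^ (e + 1) * (αM * |a (N - i)| + γ * |a i|) =
            αM ^ (e + 2) * |a (N - i)| + γ * (αM ^ (e + 1) * |a i|) := by ring
        nlinarith [hmul, hstep2]
  -- a N = 0
  have haN : a N = 0 := by
    have hfin := key N (by omega) le_rfl
    have eN : 2 * N - N = N := by omega
    have eZ : N - N = 0 := by omega
    rw [eN, eZ, ha0] at hfin
    have hcN : (0:ℝ) < (αQ + αM) ^ N := pow_pos hc N
    have : |a N| ≤ 0 := by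
      rw [abs_zero] at hfin
      nlinarith
    have := abs_nonneg (a N)
    have : |a N| = 0 := le_antisymm ‹|a N| ≤ 0› this
    exact abs_eq_zero.1 this
  -- zeros on the top region [k, N]
  have Z1 : ∀ t, t ≤ N - k → a (N - t) = 0 := by
    intro t
    induction t with
    | zero => intro _; simpa using haN
    | succ t IH =>
      intro hts
      have htop := topEq (N - t) (by omega) (by omega)
      rw [IH (by omega)] at htop
      have e1 : N - t - 1 = N - (t + 1) := by omega
      rw [e1] at htop
      have : αM * a (N - (t + 1)) = 0 := by linarith
      have := mul_eq_zero.1 this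
      rcases this with h | h
      · exact absurd h (ne_of_gt hαM)
      · exact h
  -- zeros on the bottom region [0, l]
  have Z2 : ∀ i, i ≤ l → a i = 0 := by
    intro i
    induction i with
    | zero => intro _; exact ha0
    | succ i IH =>
      intro hil
      have hb := botEq (i + 1) (by omega) hil
      simp only [Nat.add_sub_cancel] at hb
      rw [IH (by omega)] at hb
      have e2 : N + 1 - (i + 1) = N - i := by omega
      rw [e2] at hb
      have hz : a (N - i) = 0 := Z1 i (by omega)
      rw [hz] at hb
      have : (αQ + αM) * a (i + 1) = 0 := by linarith
      rcases mul_eq_zero.1 this with h | h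
      · exact absurd h (ne_of_gt hc)
      · exact h
  -- conclusion
  intro i h1i hiN
  have hzero : a i = 0 := by
    rcases le_or_gt i l with h | h
    · exact Z2 i h
    · have : a (N - (N - i)) = 0 := Z1 (N - i) (by omega)
      have e : N - (N - i) = i := by omega
      rwa [e] at this
  have := lobA_ne N x y (by omega : i ≠ 0)
  rw [ha] at hzero
  rw [this] at hzero
  linarith
theorem stmt_15 (N : ℕ) (hN : 1 ≤ N) (αQ αM γ lam : ℝ)
    (hαQ : 0 < αQ) (hαM : 0 < αM) (hγ : 0 < γ) (hlam : 0 < lam)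
    (x y : ℕ → ℝ)
    (hx : ∀ i, 1 ≤ i → i ≤ N → 0 < x i)
    (hy : ∀ i, 1 ≤ i → i ≤ N → 0 < y i)
    (h1 : lam = (αQ + αM) * x 1 + γ * min (x 1) (y 1))
    (h2 : ∀ i, 2 ≤ i → i ≤ N →
      αM * x (i - 1) = (αQ + αM) * x i + γ * min (x i) (y i))
    (h3 : ∀ i, 1 ≤ i → i < N →
      αM * y (i + 1) = (αQ + αM) * y i + γ * min (x i) (y i))
    (h4 : lam = (αQ + αM) * y N + γ * min (x N) (y N)) :
    (∀ i, 1 ≤ i → i ≤ N → x i = y (N + 1 - i)) ∧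
    (∀ m, N = 2 * m →
      (∀ i, 1 ≤ i → i ≤ m → y i < x i) ∧
      (∀ i, m < i → i ≤ N → x i < y i)) := by
  classical
  have ymono := lob_ymono N αQ αM γ hαQ hαM hγ x y hx hy h3
  have xmono := lob_xmono N αQ αM γ hαQ hαM hγ x y hx hy h2
  set k := Nat.findGreatest (fun i => 1 ≤ i ∧ y i < x i) N with hk
  set l := Nat.findGreatest (fun i => 1 ≤ i ∧ y i ≤ x i) N with hl
  have hkN : k ≤ N := Nat.findGreatest_le N
  have hlN : l ≤ N := Nat.findGreatest_le N
  have hkc : ∀ i, 1 ≤ i → i ≤ N → (y i < x i ↔ i ≤ k) := by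
    intro i h1i hiN
    constructor
    · intro h
      exact Nat.le_findGreatest hiN ⟨h1i, h⟩
    · intro hik
      have hk0 : k ≠ 0 := by omega
      have hPk : 1 ≤ k ∧ y k < x k := Nat.findGreatest_of_ne_zero hk.symm hk0
      rcases eq_or_lt_of_le hik with h | h
      · cases h; exact hPk.2
      · have hy' : y i < y k := ymono i k h1i h hkN
        have hx' : x k < x i := xmono i k h1i h hkN
        linarith [hPk.2]
  have hlc : ∀ i, 1 ≤ i → i ≤ N → (y i ≤ x i ↔ i ≤ l) := by
    intro i h1i hiN
    constructor
    · intro h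
      exact Nat.le_findGreatest hiN ⟨h1i, h⟩
    · intro hil
      have hl0 : l ≠ 0 := by omega
      have hPl : 1 ≤ l ∧ y l ≤ x l := Nat.findGreatest_of_ne_zero hl.symm hl0
      rcases eq_or_lt_of_le hil with h | h
      · cases h; exact hPl.2
      · have hy' : y i < y l := ymono i l h1i h hlN
        have hx' : x l < x i := xmono i l h1i h hlN
        linarith [hPl.2]
  have part1 : ∀ i, 1 ≤ i → i ≤ N → x i = y (N + 1 - i) := by
    rcases Nat.lt_trichotomy (k + l) N with hlt | heq | hgt
    · -- reflected configuration is contradictory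
      exfalso
      refine lob_contra N αQ αM γ lam hαQ hαM hγ
        (fun i => y (N + 1 - i)) (fun i => x (N + 1 - i))
        (fun i h1i hiN => hy (N + 1 - i) (by omega) (by omega))
        (fun i h1i hiN => hx (N + 1 - i) (by omega) (by omega))
        ?_ ?_ ?_ ?_ (N - l) (N - k) (by omega) (by omega) ?_ ?_ (by omega)
      · show lam = (αQ + αM) * y (N + 1 - 1) + γ * min (y (N + 1 - 1)) (x (N + 1 - 1))
        have e : N + 1 - 1 = N := by omega
        rw [e, min_comm]
        exact h4
      · intro i h2i hiN
        show αM * y (N + 1 - (i - 1)) =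
          (αQ + αM) * y (N + 1 - i) + γ * min (y (N + 1 - i)) (x (N + 1 - i))
        have hh := h3 (N + 1 - i) (by omega) (by omega)
        have e : N + 1 - i + 1 = N + 1 - (i - 1) := by omega
        rw [e, min_comm] at hh
        exact hh
      · intro i h1i hiN
        show αM * x (N + 1 - (i + 1)) =
          (αQ + αM) * x (N + 1 - i) + γ * min (y (N + 1 - i)) (x (N + 1 - i))
        have hh := h2 (N + 1 - i) (by omega) (by omega)
        have e : N + 1 - i - 1 = N + 1 - (i + 1) := by omega
        rw [e, min_comm] at hh
        exact hh
      · show lam = (αQ + αM) * x (N + 1 - N) + γ * min (y (N + 1 - N)) (x (N + 1 - N))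
        have e : N + 1 - N = 1 := by omega
        rw [e, min_comm]
        exact h1
      · intro i h1i hiN
        show x (N + 1 - i) < y (N + 1 - i) ↔ i ≤ N - l
        have hj := hlc (N + 1 - i) (by omega) (by omega)
        constructor
        · intro hlt'
          have h1 : ¬ (N + 1 - i ≤ l) := fun hh => absurd (hj.2 hh) (not_le.2 hlt')
          omega
        · intro hi
          by_contra hnot
          have := hj.1 (not_lt.1 hnot)
          omega
      · intro i h1i hiN
        show x (N + 1 - i) ≤ y (N + 1 - i) ↔ i ≤ N - k
        have hj := hkc (N + 1 - i) (by omega) (by omega)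
        constructor
        · intro hle'
          have h1 : ¬ (N + 1 - i ≤ k) := fun hh => absurd (hj.2 hh) (not_lt.2 hle')
          omega
        · intro hi
          by_contra hnot
          have := hj.1 (not_le.1 hnot)
          omega
    · exact lob_caseA N αQ αM γ lam hαQ hαM hγ x y hx hy h1 h2 h3 h4
        k l hkN hlN hkc hlc heq
    · exact absurd (lob_contra N αQ αM γ lam hαQ hαM hγ x y hx hy h1 h2 h3 h4
        k l hkN hlN hkc hlc (by omega)) not_false
  refine ⟨part1, ?_⟩
  intro m hm
  constructor
  · intro i h1i him
    rw [part1 i h1i (by omega)]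
    exact ymono i (N + 1 - i) h1i (by omega) (by omega)
  · intro i hmi hiN
    rw [part1 i (by omega) hiN]
    exact ymono (N + 1 - i) i (by omega) (by omega) hiN
end

section
/- Let α_Q, α_M, γ, λ_b, λ_s > 0, and let (x*, y*) be a positive solution of the fixed-point system (6). If x*_N > y*_N (pattern (i) of Lemma 4), then x*_i > y*_i for all 1 ≤ i ≤ N, and consequently x* satisfies the linear recursion α_M x*_{i-1} = (α_Q+α_M)x*_i + γ y*_i for 1 < i ≤ N while y* satisfies α_M y*_{i+1} = (α_Q+α_M+γ)y*_i for 1 ≤ i < N, so that y*_i = (α_M/(α_Q+α_M+γ))^{N-i} y*_N. -/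
theorem stmt_17 (N : ℕ) (hN : 1 ≤ N) (αQ αM γ lb ls : ℝ)
    (hαQ : 0 < αQ) (hαM : 0 < αM) (hγ : 0 < γ) (hlb : 0 < lb) (hls : 0 < ls)
    (x y : ℕ → ℝ)
    (hx : ∀ i, 1 ≤ i → i ≤ N → 0 < x i)
    (hy : ∀ i, 1 ≤ i → i ≤ N → 0 < y i)
    (h1 : lb = (αQ + αM) * x 1 + γ * min (x 1) (y 1))
    (h2 : ∀ i, 2 ≤ i → i ≤ N →
      αM * x (i - 1) = (αQ + αM) * x i + γ * min (x i) (y i))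
    (h3 : ∀ i, 1 ≤ i → i < N →
      αM * y (i + 1) = (αQ + αM) * y i + γ * min (x i) (y i))
    (h4 : ls = (αQ + αM) * y N + γ * min (x N) (y N))
    (hNN : y N < x N) :
    (∀ i, 1 ≤ i → i ≤ N → y i < x i) ∧
    (∀ i, 2 ≤ i → i ≤ N → αM * x (i - 1) = (αQ + αM) * x i + γ * y i) ∧
    (∀ i, 1 ≤ i → i < N → αM * y (i + 1) = (αQ + αM + γ) * y i) ∧
    (∀ i, 1 ≤ i → i ≤ N →
      y i = (αM / (αQ + αM + γ)) ^ (N - i) * y N) := by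
  have hsum : 0 < αQ + αM + γ := by linarith
  -- x is ≥ x N on the range
  have hstepx : ∀ i, 1 ≤ i → i + 1 ≤ N → x (i + 1) < x i := by
    intro i hi hiN
    have h := h2 (i + 1) (by omega) hiN
    simp only [Nat.add_sub_cancel] at h
    have hmin : 0 < min (x (i + 1)) (y (i + 1)) :=
      lt_min (hx _ (by omega) hiN) (hy _ (by omega) hiN)
    have hx1 : 0 < x (i + 1) := hx _ (by omega) hiN
    nlinarith
  have hstepy : ∀ i, 1 ≤ i → i < N → y i < y (i + 1) := by
    intro i hi hiN
    have h := h3 i hi hiN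
    have hmin : 0 < min (x i) (y i) :=
      lt_min (hx _ hi (by omega)) (hy _ hi (by omega))
    have hy1 : 0 < y i := hy _ hi (by omega)
    nlinarith
  have hxN : ∀ k i, 1 ≤ i → i + k = N → x N ≤ x i := by
    intro k
    induction k with
    | zero => intro i hi h; simp at h; subst h; exact le_refl _
    | succ k ih =>
      intro i hi h
      have h1 := ih (i + 1) (by omega) (by omega)
      have h2 := hstepx i hi (by omega)
      linarith
  have hyN : ∀ k i, 1 ≤ i → i + k = N → y i ≤ y N := by
    intro k
    induction k with
    | zero => intro i hi h; simp at h; subst h; exact le_refl _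
    | succ k ih =>
      intro i hi h
      have h1 := ih (i + 1) (by omega) (by omega)
      have h2 := hstepy i hi (by omega)
      linarith
  have hlt : ∀ i, 1 ≤ i → i ≤ N → y i < x i := by
    intro i hi hiN
    have hx' := hxN (N - i) i hi (by omega)
    have hy' := hyN (N - i) i hi (by omega)
    linarith
  have hmin : ∀ i, 1 ≤ i → i ≤ N → min (x i) (y i) = y i := by
    intro i hi hiN
    exact min_eq_right (le_of_lt (hlt i hi hiN))
  have c2 : ∀ i, 2 ≤ i → i ≤ N → αM * x (i - 1) = (αQ + αM) * x i + γ * y i := by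
    intro i hi hiN
    have := h2 i hi hiN
    rwa [hmin i (by omega) hiN] at this
  have c3 : ∀ i, 1 ≤ i → i < N → αM * y (i + 1) = (αQ + αM + γ) * y i := by
    intro i hi hiN
    have h := h3 i hi hiN
    rw [hmin i hi (by omega)] at h
    linarith
  have c4 : ∀ k i, 1 ≤ i → i + k = N → y i = (αM / (αQ + αM + γ)) ^ k * y N := by
    intro k
    induction k with
    | zero => intro i hi h; simp at h; subst h; simp
    | succ k ih =>
      intro i hi h
      have hih := ih (i + 1) (by omega) (by omega)
      have h3' := c3 i hi (by omega)
      have : y i = αM / (αQ + αM + γ) * y (i + 1) := by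
        field_simp
        linarith
      rw [this, hih, pow_succ]
      ring
  refine ⟨hlt, c2, c3, ?_⟩
  intro i hi hiN
  exact c4 (N - i) i hi (by omega)
end
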